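/- Let ν be a probability vector on S × A. Let π be a policy, π̃ another policy, ω ∈ [0,1], and π' = (1-ω)π + ωπ̃. Let Q : S × A → ℝ satisfy Q(s,a) ∈ [0, 1/(1−γ)] for all (s,a). Fix a sample u = (s₁,a₁,s₂) ∈ S × A × S, a stepsize α ∈ [0,1], and define the expected-TD critic update Q' by Q'(s₁,a₁) = Q(s₁,a₁) + α (R(s₁,a₁) + γ Σ_{a'} π'(a'|s₂) Q(s₂,a') − Q(s₁,a₁)) and Q'(s,a) = Q(s,a) for (s,a) ≠ (s₁,a₁). If 2ω ≤ α(1−γ), then (1/2)‖(Q' − Q) + (Q^{π} − Q^{π'})‖_ν² ≤ 2α²/(1−γ)². -/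

import Mathlib

noncomputable section

/-- A policy assigns to each state a probability distribution over actions. -/
def IsPolicy {S A : Type*} [Fintype A] (π : S → A → ℝ) : Prop :=
  (∀ s a, 0 ≤ π s a) ∧ ∀ s, ∑ a, π s a = 1

/-- A transition kernel assigns to each state-action pair a probability distribution over states. -/
def IsKernel {S A : Type*} [Fintype S] (p : S → A → S → ℝ) : Prop :=
  (∀ s a s', 0 ≤ p s a s') ∧ ∀ s a, ∑ s', p s a s' = 1

/-- Sup norm on `S × A → ℝ` (functions `S → A → ℝ`). -/
def supNorm {S A : Type*} [Fintype S] [Fintype A] [Nonempty S] [Nonempty A]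
    (Q : S → A → ℝ) : ℝ :=
  Finset.univ.sup' Finset.univ_nonempty (fun sa : S × A => |Q sa.1 sa.2|)

/-- Total variation distance between two distributions on a finite set. -/
def dTV {Ω : Type*} [Fintype Ω] (p₁ p₂ : Ω → ℝ) : ℝ :=
  (∑ x, |p₁ x - p₂ x|) / 2

/-- Weighted ℓ₂ norm with weights ν. -/
def nuNorm {S A : Type*} [Fintype S] [Fintype A] (ν : S → A → ℝ) (Q : S → A → ℝ) : ℝ :=
  Real.sqrt (∑ s, ∑ a, ν s a * (Q s a) ^ 2)

/-- Weighted ℓ₂ inner product with weights ν. -/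
def nuInner {S A : Type*} [Fintype S] [Fintype A] (ν : S → A → ℝ) (Q₁ Q₂ : S → A → ℝ) : ℝ :=
  ∑ s, ∑ a, ν s a * Q₁ s a * Q₂ s a

/-- Bellman operator associated with a policy π. -/
def bellman {S A : Type*} [Fintype S] [Fintype A]
    (p : S → A → S → ℝ) (R : S → A → ℝ) (γ : ℝ) (π : S → A → ℝ)
    (Q : S → A → ℝ) : S → A → ℝ :=
  fun s a => R s a + γ * ∑ s', p s a s' * ∑ a', π s' a' * Q s' a'

/-- Bellman optimality operator. -/
def bellmanOpt {S A : Type*} [Fintype S] [Fintype A] [Nonempty A]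
    (p : S → A → S → ℝ) (R : S → A → ℝ) (γ : ℝ)
    (Q : S → A → ℝ) : S → A → ℝ :=
  fun s a => R s a + γ * ∑ s', p s a s' *
    Finset.univ.sup' Finset.univ_nonempty (fun a' => Q s' a')

/-- Expected operator F̄(Q,π) = (I − D)Q + D H_π Q, where D has diagonal entries μ_b(s)π_b(a|s). -/
def Fbar {S A : Type*} [Fintype S] [Fintype A]
    (p : S → A → S → ℝ) (R : S → A → ℝ) (γ : ℝ)
    (μb : S → ℝ) (πb : S → A → ℝ) (π : S → A → ℝ) (Q : S → A → ℝ) : S → A → ℝ :=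
  fun s a => (1 - μb s * πb s a) * Q s a + μb s * πb s a * bellman p R γ π Q s a

/-- Importance-sampling TD operator, for y = ((s₁,a₁),(s₂,a₂)). -/
def FIS {S A : Type*} [Fintype S] [Fintype A] [DecidableEq S] [DecidableEq A]
    (R : S → A → ℝ) (γ : ℝ) (πb : S → A → ℝ)
    (Q : S → A → ℝ) (y : (S × A) × S × A) (π : S → A → ℝ) : S → A → ℝ :=
  fun s a => if (s, a) = y.1 then
      R y.1.1 y.1.2 + γ * (π y.2.1 y.2.2 / πb y.2.1 y.2.2) * Q y.2.1 y.2.2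
    else Q s a

/-- Expected-TD operator, for u = (s₁,a₁,s₂). -/
def FETD {S A : Type*} [Fintype S] [Fintype A] [DecidableEq S] [DecidableEq A]
    (R : S → A → ℝ) (γ : ℝ)
    (Q : S → A → ℝ) (u : S × A × S) (π : S → A → ℝ) : S → A → ℝ :=
  fun s a => if (s, a) = (u.1, u.2.1) then
      R u.1 u.2.1 + γ * ∑ a', π u.2.2 a' * Q u.2.2 a'
    else Q s a

/-- State transition matrix induced by a policy. -/
def Pmat {S A : Type*} [Fintype A] (p : S → A → S → ℝ) (π : S → A → ℝ) : Matrix S S ℝ :=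
  Matrix.of fun s s' => ∑ a, π s a * p s a s'

end

lemma wsum_le_aux {ι : Type*} [Fintype ι] {w f : ι → ℝ} {M : ℝ}
    (hw : ∀ i, 0 ≤ w i) (hw1 : ∑ i, w i = 1) (h : ∀ i, f i ≤ M) :
    ∑ i, w i * f i ≤ M := by
  calc ∑ i, w i * f i ≤ ∑ i, w i * M :=
        Finset.sum_le_sum fun i _ => mul_le_mul_of_nonneg_left (h i) (hw i)
    _ = M := by rw [← Finset.sum_mul, hw1, one_mul]

lemma le_wsum_aux {ι : Type*} [Fintype ι] {w f : ι → ℝ} {m : ℝ}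
    (hw : ∀ i, 0 ≤ w i) (hw1 : ∑ i, w i = 1) (h : ∀ i, m ≤ f i) :
    m ≤ ∑ i, w i * f i := by
  calc m = ∑ i, w i * m := by rw [← Finset.sum_mul, hw1, one_mul]
    _ ≤ ∑ i, w i * f i :=
        Finset.sum_le_sum fun i _ => mul_le_mul_of_nonneg_left (h i) (hw i)

lemma abs_wsum_le_aux {ι : Type*} [Fintype ι] {w f : ι → ℝ} {M : ℝ}
    (hw : ∀ i, 0 ≤ w i) (hw1 : ∑ i, w i = 1) (h : ∀ i, |f i| ≤ M) :
    |∑ i, w i * f i| ≤ M := by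
  rw [abs_le]
  constructor
  · exact le_wsum_aux hw hw1 fun i => neg_le_of_abs_le (h i)
  · exact wsum_le_aux hw hw1 fun i => le_of_abs_le (h i)

lemma fp_range_aux {S A : Type*} [Fintype S] [Fintype A] [Nonempty S] [Nonempty A]
    (p : S → A → S → ℝ) (hp : IsKernel p)
    (R : S → A → ℝ) (hR : ∀ s a, 0 ≤ R s a ∧ R s a ≤ 1)
    (γ : ℝ) (hγ : 0 < γ ∧ γ < 1)
    (π : S → A → ℝ) (hπ : IsPolicy π)
    (Q : S → A → ℝ) (hQ : bellman p R γ π Q = Q) :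
    ∀ s a, 0 ≤ Q s a ∧ Q s a ≤ 1 / (1 - γ) := by
  have h1γ : 0 < 1 - γ := by linarith [hγ.2]
  obtain ⟨⟨sM, aM⟩, -, hM⟩ := Finset.exists_mem_eq_sup' (Finset.univ_nonempty)
      (fun sa : S × A => Q sa.1 sa.2)
  obtain ⟨⟨sm, am⟩, -, hm⟩ := Finset.exists_mem_eq_inf' (Finset.univ_nonempty)
      (fun sa : S × A => Q sa.1 sa.2)
  have hleM : ∀ s a, Q s a ≤ Q sM aM := fun s a => hM ▸
    Finset.le_sup' (f := fun sa : S × A => Q sa.1 sa.2) (Finset.mem_univ (s, a))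
  have hmle : ∀ s a, Q sm am ≤ Q s a := fun s a => hm ▸
    Finset.inf'_le (f := fun sa : S × A => Q sa.1 sa.2) (Finset.mem_univ (s, a))
  have hMub : Q sM aM ≤ 1 / (1 - γ) := by
    have hfix : R sM aM + γ * ∑ s', p sM aM s' * ∑ a', π s' a' * Q s' a' = Q sM aM :=
      congrFun (congrFun hQ sM) aM
    have hin : ∑ s', p sM aM s' * ∑ a', π s' a' * Q s' a' ≤ Q sM aM :=
      wsum_le_aux (hp.1 sM aM) (hp.2 sM aM)
        (fun s' => wsum_le_aux (hπ.1 s') (hπ.2 s') (fun a' => hleM s' a'))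
    have hstep : Q sM aM ≤ 1 + γ * Q sM aM := by
      have := (hR sM aM).2
      nlinarith [hγ.1.le]
    rw [le_div_iff₀ h1γ]
    nlinarith
  have hmlb : 0 ≤ Q sm am := by
    have hfix : R sm am + γ * ∑ s', p sm am s' * ∑ a', π s' a' * Q s' a' = Q sm am :=
      congrFun (congrFun hQ sm) am
    have hin : Q sm am ≤ ∑ s', p sm am s' * ∑ a', π s' a' * Q s' a' :=
      le_wsum_aux (hp.1 sm am) (hp.2 sm am)
        (fun s' => le_wsum_aux (hπ.1 s') (hπ.2 s') (fun a' => hmle s' a'))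
    have := (hR sm am).1
    nlinarith [hγ.1, hγ.2]
  exact fun s a => ⟨le_trans hmlb (hmle s a), le_trans (hleM s a) hMub⟩

set_option maxHeartbeats 1000000 in
/-- Bound on the residual term for the ETD-based critic update (Lemma B.6). -/
theorem residual_bound_ETD {S A : Type*} [Fintype S] [Fintype A] [Nonempty S] [Nonempty A]
    (p : S → A → S → ℝ) (hp : IsKernel p)
    (R : S → A → ℝ) (hR : ∀ s a, 0 ≤ R s a ∧ R s a ≤ 1)
    (γ : ℝ) (hγ : 0 < γ ∧ γ < 1)
    (ν : S → A → ℝ) (hνnonneg : ∀ s a, 0 ≤ ν s a) (hνsum : ∑ s, ∑ a, ν s a = 1)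
    (π πt π' : S → A → ℝ) (hπ : IsPolicy π) (hπt : IsPolicy πt)
    (ω : ℝ) (hω : 0 ≤ ω ∧ ω ≤ 1)
    (hπ' : ∀ s a, π' s a = (1 - ω) * π s a + ω * πt s a)
    (Q Qpi Qpi' : S → A → ℝ)
    (hQrange : ∀ s a, 0 ≤ Q s a ∧ Q s a ≤ 1 / (1 - γ))
    (hQpi : bellman p R γ π Qpi = Qpi)
    (hQpi' : bellman p R γ π' Qpi' = Qpi')
    (s₁ : S) (a₁ : A) (s₂ : S)
    (α : ℝ) (hα : 0 ≤ α ∧ α ≤ 1)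
    (Q' : S → A → ℝ)
    (hQ'upd : Q' s₁ a₁
      = Q s₁ a₁ + α * (R s₁ a₁ + γ * (∑ a', π' s₂ a' * Q s₂ a') - Q s₁ a₁))
    (hQ'rest : ∀ s a, (s, a) ≠ (s₁, a₁) → Q' s a = Q s a)
    (hstep : 2 * ω ≤ α * (1 - γ)) :
    (1 / 2) * nuNorm ν (fun s a => (Q' s a - Q s a) + (Qpi s a - Qpi' s a)) ^ 2
      ≤ 2 * α ^ 2 / (1 - γ) ^ 2 := by
  have h1γ : 0 < 1 - γ := by linarith [hγ.2]
  have hπ'pol : IsPolicy π' := by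
    constructor
    · intro s a
      rw [hπ' s a]
      have := hπ.1 s a; have := hπt.1 s a
      nlinarith [hω.1, hω.2]
    · intro s
      simp only [hπ']
      rw [Finset.sum_add_distrib, ← Finset.mul_sum, ← Finset.mul_sum, hπ.2 s, hπt.2 s]
      ring
  have hQpiR := fp_range_aux p hp R hR γ hγ π hπ Qpi hQpi
  have hQpi'R := fp_range_aux p hp R hR γ hγ π' hπ'pol Qpi' hQpi'
  set M' : ℝ := 1 / (1 - γ) with hM'def
  have hM'pos : 0 < M' := by positivity
  -- sup norm of Qpi - Qpi'
  obtain ⟨⟨s₀, a₀⟩, -, hD⟩ := Finset.exists_mem_eq_sup' (Finset.univ_nonempty)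
      (fun sa : S × A => |Qpi sa.1 sa.2 - Qpi' sa.1 sa.2|)
  set D := Finset.univ.sup' Finset.univ_nonempty
      (fun sa : S × A => |Qpi sa.1 sa.2 - Qpi' sa.1 sa.2|) with hDdef
  have hDle : ∀ s a, |Qpi s a - Qpi' s a| ≤ D := fun s a =>
    Finset.le_sup' (f := fun sa : S × A => |Qpi sa.1 sa.2 - Qpi' sa.1 sa.2|)
      (Finset.mem_univ (s, a))
  -- inner bound: |∑π Qpi - ∑π' Qpi'| ≤ D + ω * M'
  have hinner : ∀ s' : S, |(∑ a', π s' a' * Qpi s' a') - ∑ a', π' s' a' * Qpi' s' a'|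
      ≤ D + ω * M' := by
    intro s'
    have hsplit : (∑ a', π s' a' * Qpi s' a') - ∑ a', π' s' a' * Qpi' s' a'
        = (∑ a', π s' a' * (Qpi s' a' - Qpi' s' a'))
          + ω * ((∑ a', π s' a' * Qpi' s' a') - ∑ a', πt s' a' * Qpi' s' a') := by
      simp only [← Finset.sum_sub_distrib, Finset.mul_sum]
      rw [← Finset.sum_add_distrib]
      exact Finset.sum_congr rfl fun a' _ => by rw [hπ' s' a']; ring
    rw [hsplit]
    have h1 : |∑ a', π s' a' * (Qpi s' a' - Qpi' s' a')| ≤ D :=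
      abs_wsum_le_aux (hπ.1 s') (hπ.2 s') (fun a' => hDle s' a')
    have h2a : ∑ a', π s' a' * Qpi' s' a' ≤ M' :=
      wsum_le_aux (hπ.1 s') (hπ.2 s') (fun a' => (hQpi'R s' a').2)
    have h2b : 0 ≤ ∑ a', π s' a' * Qpi' s' a' :=
      Finset.sum_nonneg fun a' _ => mul_nonneg (hπ.1 s' a') (hQpi'R s' a').1
    have h2c : ∑ a', πt s' a' * Qpi' s' a' ≤ M' :=
      wsum_le_aux (hπt.1 s') (hπt.2 s') (fun a' => (hQpi'R s' a').2)
    have h2d : 0 ≤ ∑ a', πt s' a' * Qpi' s' a' :=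
      Finset.sum_nonneg fun a' _ => mul_nonneg (hπt.1 s' a') (hQpi'R s' a').1
    have h2 : |ω * ((∑ a', π s' a' * Qpi' s' a') - ∑ a', πt s' a' * Qpi' s' a')| ≤ ω * M' := by
      rw [abs_mul, abs_of_nonneg hω.1]
      apply mul_le_mul_of_nonneg_left _ hω.1
      rw [abs_le]; constructor <;> linarith
    calc |_ + _| ≤ _ + _ := abs_add_le _ _
      _ ≤ D + ω * M' := add_le_add h1 h2
  -- contraction bound: D ≤ γ (D + ω M')
  have hDcontr : D ≤ γ * (D + ω * M') := by
    have hfix : Qpi s₀ a₀ = R s₀ a₀ + γ * ∑ s', p s₀ a₀ s' * ∑ a', π s' a' * Qpi s' a' :=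
      (congrFun (congrFun hQpi s₀) a₀).symm
    have hfix' : Qpi' s₀ a₀ = R s₀ a₀ + γ * ∑ s', p s₀ a₀ s' * ∑ a', π' s' a' * Qpi' s' a' :=
      (congrFun (congrFun hQpi' s₀) a₀).symm
    have hdiff : Qpi s₀ a₀ - Qpi' s₀ a₀
        = γ * ∑ s', p s₀ a₀ s' *
            ((∑ a', π s' a' * Qpi s' a') - ∑ a', π' s' a' * Qpi' s' a') := by
      have e : ∑ s', p s₀ a₀ s' * ((∑ a', π s' a' * Qpi s' a') - ∑ a', π' s' a' * Qpi' s' a')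
          = (∑ s', p s₀ a₀ s' * ∑ a', π s' a' * Qpi s' a')
            - ∑ s', p s₀ a₀ s' * ∑ a', π' s' a' * Qpi' s' a' := by
        rw [← Finset.sum_sub_distrib]; exact Finset.sum_congr rfl fun s' _ => by ring
      rw [hfix, hfix', e]; ring
    calc D = |Qpi s₀ a₀ - Qpi' s₀ a₀| := hD
      _ = γ * |∑ s', p s₀ a₀ s' *
            ((∑ a', π s' a' * Qpi s' a') - ∑ a', π' s' a' * Qpi' s' a')| := by
          rw [hdiff, abs_mul, abs_of_nonneg hγ.1.le]
      _ ≤ γ * (D + ω * M') :=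
          mul_le_mul_of_nonneg_left
            (abs_wsum_le_aux (hp.1 s₀ a₀) (hp.2 s₀ a₀) hinner) hγ.1.le
  have hDnn : 0 ≤ D := le_trans (abs_nonneg _) (hDle (Classical.arbitrary S) (Classical.arbitrary A))
  have hωM' : 0 ≤ ω * M' := mul_nonneg hω.1 hM'pos.le
  have hDbound : D ≤ α / (2 * (1 - γ)) := by
    have hM'eq : M' * (1 - γ) = 1 := by rw [hM'def]; field_simp
    have hx : 2 * ω * M' ≤ α * ((1 - γ) * M') :=
      by nlinarith [mul_le_mul_of_nonneg_right hstep hM'pos.le]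
    rw [le_div_iff₀ (by positivity : (0:ℝ) < 2 * (1 - γ))]
    nlinarith [hDcontr, hM'eq, hx, hωM', hγ.2, hDnn, mul_nonneg hωM' h1γ.le]
  have hDbound' : D ≤ α / (2 * (1 - γ)) := hDbound
  -- pointwise bound
  set B : ℝ := 3 * α / (2 * (1 - γ)) with hBdef
  have hBnn : 0 ≤ B := div_nonneg (by linarith [hα.1]) (by linarith)
  have hpt : ∀ s a, |(Q' s a - Q s a) + (Qpi s a - Qpi' s a)| ≤ B := by
    intro s a
    have habs := hDle s a
    by_cases h : (s, a) = (s₁, a₁)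
    · obtain ⟨h1, h2⟩ := Prod.mk.injEq s a s₁ a₁ ▸ h
      subst h1; subst h2
      have hδup : R s a + γ * (∑ a', π' s₂ a' * Q s₂ a') - Q s a ≤ M' := by
        have hs : ∑ a', π' s₂ a' * Q s₂ a' ≤ M' :=
          wsum_le_aux (hπ'pol.1 s₂) (hπ'pol.2 s₂) (fun a' => (hQrange s₂ a').2)
        have := (hR s a).2
        have := (hQrange s a).1
        have hgm : γ * M' = M' - 1 := by
          rw [hM'def]; field_simp; ring
        nlinarith [hγ.1, (hR s a).2, (hQrange s a).1,
          mul_le_mul_of_nonneg_left hs hγ.1.le]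
      have hδlo : -M' ≤ R s a + γ * (∑ a', π' s₂ a' * Q s₂ a') - Q s a := by
        have hs : 0 ≤ ∑ a', π' s₂ a' * Q s₂ a' :=
          Finset.sum_nonneg fun a' _ => mul_nonneg (hπ'pol.1 s₂ a') (hQrange s₂ a').1
        nlinarith [(hR s a).1, (hQrange s a).2, hγ.1]
      have hQ'diff : |Q' s a - Q s a| ≤ α * M' := by
        rw [hQ'upd]
        rw [show Q s a + α * (R s a + γ * (∑ a', π' s₂ a' * Q s₂ a') - Q s a) - Q s a
            = α * (R s a + γ * (∑ a', π' s₂ a' * Q s₂ a') - Q s a) by ring]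
        rw [abs_mul, abs_of_nonneg hα.1]
        apply mul_le_mul_of_nonneg_left _ hα.1
        rw [abs_le]; exact ⟨hδlo, hδup⟩
      calc |(Q' s a - Q s a) + (Qpi s a - Qpi' s a)|
          ≤ |Q' s a - Q s a| + |Qpi s a - Qpi' s a| := abs_add_le _ _
        _ ≤ α * M' + α / (2 * (1 - γ)) := add_le_add hQ'diff (le_trans habs hDbound)
        _ = B := by rw [hM'def, hBdef]; field_simp; ring
    · rw [hQ'rest s a h, sub_self, zero_add]
      calc |Qpi s a - Qpi' s a| ≤ α / (2 * (1 - γ)) := le_trans habs hDbound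
        _ ≤ B := by
            rw [hBdef, div_le_div_iff₀ (by positivity) (by positivity)]
            nlinarith [hα.1, h1γ]
  -- sum it up
  have hsum : ∑ s, ∑ a, ν s a * ((Q' s a - Q s a) + (Qpi s a - Qpi' s a)) ^ 2 ≤ B ^ 2 := by
    calc ∑ s, ∑ a, ν s a * ((Q' s a - Q s a) + (Qpi s a - Qpi' s a)) ^ 2
        ≤ ∑ s, ∑ a, ν s a * B ^ 2 := by
          apply Finset.sum_le_sum; intro s _
          apply Finset.sum_le_sum; intro a _
          apply mul_le_mul_of_nonneg_left _ (hνnonneg s a)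
          calc ((Q' s a - Q s a) + (Qpi s a - Qpi' s a)) ^ 2
              = |(Q' s a - Q s a) + (Qpi s a - Qpi' s a)| ^ 2 := (sq_abs _).symm
            _ ≤ B ^ 2 := pow_le_pow_left₀ (abs_nonneg _) (hpt s a) 2
      _ = B ^ 2 := by
          rw [show (∑ s, ∑ a, ν s a * B ^ 2) = (∑ s, ∑ a, ν s a) * B ^ 2 by
            rw [Finset.sum_mul]; exact Finset.sum_congr rfl fun s _ => (Finset.sum_mul _ _ _).symm]
          rw [hνsum, one_mul]
  have hnn : 0 ≤ ∑ s, ∑ a, ν s a * ((Q' s a - Q s a) + (Qpi s a - Qpi' s a)) ^ 2 :=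
    Finset.sum_nonneg fun s _ => Finset.sum_nonneg fun a _ =>
      mul_nonneg (hνnonneg s a) (sq_nonneg _)
  have hnorm : nuNorm ν (fun s a => (Q' s a - Q s a) + (Qpi s a - Qpi' s a)) ^ 2
      = ∑ s, ∑ a, ν s a * ((Q' s a - Q s a) + (Qpi s a - Qpi' s a)) ^ 2 := by
    rw [nuNorm, Real.sq_sqrt hnn]
  rw [hnorm]
  have hB2 : B ^ 2 = 9 * α ^ 2 / (4 * (1 - γ) ^ 2) := by
    rw [hBdef, div_pow]
    congr 1 <;> ring
  calc (1 / 2) * (∑ s, ∑ a, ν s a * ((Q' s a - Q s a) + (Qpi s a - Qpi' s a)) ^ 2)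
      ≤ (1 / 2) * B ^ 2 := by linarith
    _ ≤ 2 * α ^ 2 / (1 - γ) ^ 2 := by
        rw [hB2, one_div, inv_mul_eq_div, div_div,
          div_le_div_iff₀ (by positivity) (by positivity)]
        nlinarith [mul_nonneg (sq_nonneg α) (sq_nonneg (1 - γ))]
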